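/- Let the closed-loop system of Proposition 3 be ξ̇ = k_i(Q − Q_r)/C together with the equivalent-buck dynamics φ̇_T = −Q/C + E_eq μ, Q̇ = φ_T/L − Q/(RC), where μ = −(1/E_eq)(k_d φ_T/L + k_d ξ + L k_i (Q − Q_r)/C). Then the linear change of coordinates χ₁ = (φ_T − LQ_r/(RC)) + L(ξ − ξ*), χ₂ = Q − Q_r, χ₃ = ξ − ξ*, with ξ* = (−1/k_d − 1/R)Q_r/C, transforms the closed loop exactly into χ̇ = [[−k_d, −1, 0],[1, −1/R, −k_i],[0, k_i, 0]] ∇H_d(χ), where H_d(χ) = ½(χ₁²/L + χ₂²/C + χ₃²/k_i). -/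

import Mathlib

theorem stmt14 (L C R Eeq kd ki Qr : ℝ) (hL : 0 < L) (hC : 0 < C) (hR : 0 < R)
    (hEeq : 0 < Eeq) (hkd : 0 < kd) (hki : 0 < ki)
    (φT Q ξ : ℝ → ℝ)
    -- closed loop: `φ̇_T = −Q/C + E_eq μ` with
    -- `μ = −(1/E_eq)(k_d φ_T/L + k_d ξ + L k_i (Q − Q_r)/C)`
    (hφT : ∀ t, HasDerivAt φT
      (-(Q t) / C + Eeq * (-(1 / Eeq) *
        (kd * φT t / L + kd * ξ t + L * ki * (Q t - Qr) / C))) t)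
    -- `Q̇ = φ_T/L − Q/(RC)`
    (hQ : ∀ t, HasDerivAt Q (φT t / L - Q t / (R * C)) t)
    -- `ξ̇ = k_i (Q − Q_r)/C`
    (hξ : ∀ t, HasDerivAt ξ (ki * (Q t - Qr) / C) t)
    (ξstar : ℝ) (hξstar : ξstar = (-(1 / kd) - 1 / R) * Qr / C)
    (χ1 χ2 χ3 : ℝ → ℝ)
    (hχ1 : ∀ t, χ1 t = (φT t - L * Qr / (R * C)) + L * (ξ t - ξstar))
    (hχ2 : ∀ t, χ2 t = Q t - Qr)
    (hχ3 : ∀ t, χ3 t = ξ t - ξstar) :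
    -- the transformed dynamics is exactly
    -- `χ̇ = [[−k_d,−1,0],[1,−1/R,−k_i],[0,k_i,0]] ∇H_d(χ)` with
    -- `∇H_d(χ) = (χ₁/L, χ₂/C, χ₃/k_i)`
    (∀ t, HasDerivAt χ1 (-kd * (χ1 t / L) - χ2 t / C) t) ∧
    (∀ t, HasDerivAt χ2 (χ1 t / L - (1 / R) * (χ2 t / C) - ki * (χ3 t / ki)) t) ∧
    (∀ t, HasDerivAt χ3 (ki * (χ2 t / C)) t) := by
  have hχ1f : χ1 = fun t => (φT t - L * Qr / (R * C)) + L * (ξ t - ξstar) := funext hχ1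
  have hχ2f : χ2 = fun t => Q t - Qr := funext hχ2
  have hχ3f : χ3 = fun t => ξ t - ξstar := funext hχ3
  have hL' := hL.ne'
  have hC' := hC.ne'
  have hR' := hR.ne'
  have hE' := hEeq.ne'
  have hkd' := hkd.ne'
  have hki' := hki.ne'
  refine ⟨?_, ?_, ?_⟩
  · intro t
    rw [hχ1f]
    have h := (((hφT t).sub_const (L * Qr / (R * C))).add ((hξ t).sub_const ξstar |>.const_mul L))
    refine h.congr_deriv ?_
    simp only [hχ1, hχ2, hξstar]
    field_simp
    ring
  · intro t
    rw [hχ2f]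
    have h := (hQ t).sub_const Qr
    refine h.congr_deriv ?_
    simp only [hχ1, hχ2, hχ3, hξstar]
    field_simp
    ring
  · intro t
    rw [hχ3f]
    have h := (hξ t).sub_const ξstar
    refine h.congr_deriv ?_
    simp only [hχ2]
    ring
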